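/- Let T be a finite tree with at least two vertices and fix a linear order ⪯ on its edge set. For vertices x, y of T let ℓ_T(x, y) denote the ⪯-greatest edge on the unique path in T from x to y. Then for every nonempty subset A of the vertex set of T, the set {ℓ_T(x, y) : x, y ∈ A, x ≠ y} has exactly |A| − 1 elements. -/

import Mathlib

open scoped Classical

open SimpleGraph

theorem card_max_path_edges
    {V : Type*} [Fintype V] (G : SimpleGraph V) (hG : G.IsTree)
    (hcard : 2 ≤ Fintype.card V)
    (lo : LinearOrder {e // e ∈ G.edgeSet})
    (ℓ : V → V → {e // e ∈ G.edgeSet})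
    (hℓ : ∀ x y : V, x ≠ y → ∀ p : G.Walk x y, p.IsPath →
      (↑(ℓ x y) ∈ p.edges ∧
        ∀ e : {e // e ∈ G.edgeSet}, ↑e ∈ p.edges → lo.le e (ℓ x y))) :
    ∀ A : Finset V, A.Nonempty →
      (((A ×ˢ A).filter fun q => q.1 ≠ q.2).image fun q => ℓ q.1 q.2).card
        = A.card - 1 := by
  have hconn : ∀ x y : V, G.Reachable x y := fun x y => hG.isConnected.preconnected x y
  have hpath : ∀ x y : V, ∃ p : G.Walk x y, p.IsPath := fun x y =>
    ⟨((hconn x y).some.toPath : G.Walk x y), (hconn x y).some.toPath.2⟩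
  intro A
  induction A using Finset.strongInduction with
  | _ A IH =>
    intro hA
    by_cases h1 : A.card ≤ 1
    · have hA1 : A.card = 1 := le_antisymm h1 (Finset.card_pos.mpr hA)
      obtain ⟨a, rfl⟩ := Finset.card_eq_one.mp hA1
      have : Finset.filter (fun q : V × V => ¬q.1 = q.2) {(a, a)} = ∅ := by
        apply Finset.filter_eq_empty_iff.mpr
        simp
      simp [this]
    · push_neg at h1
      set Im : Finset V → Finset {e // e ∈ G.edgeSet} := fun B =>
        ((B ×ˢ B).filter fun q => q.1 ≠ q.2).image fun q => ℓ q.1 q.2 with hIm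
      have memIm : ∀ (B : Finset V) (f : {e // e ∈ G.edgeSet}),
          f ∈ Im B ↔ ∃ x ∈ B, ∃ y ∈ B, x ≠ y ∧ ℓ x y = f := by
        intro B f
        simp only [hIm, Finset.mem_image, Finset.mem_filter, Finset.mem_product, Prod.exists]
        constructor
        · rintro ⟨x, y, ⟨⟨hx, hy⟩, hne⟩, h⟩; exact ⟨x, hx, y, hy, hne, h⟩
        · rintro ⟨x, hx, y, hy, hne, h⟩; exact ⟨x, y, ⟨⟨hx, hy⟩, hne⟩, h⟩
      obtain ⟨x0, hx0, y0, hy0, hne0⟩ := Finset.one_lt_card.mp h1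
      have hIne : (Im A).Nonempty := ⟨ℓ x0 y0, (memIm A _).mpr ⟨x0, hx0, y0, hy0, hne0, rfl⟩⟩
      set m := @Finset.max' _ lo (Im A) hIne with hm
      have hmax : ∀ f ∈ Im A, lo.le f m := fun f hf => @Finset.le_max' _ lo (Im A) f hf
      obtain ⟨x1, hx1, y1, hy1, hne1, hℓ1⟩ := (memIm A m).mp (@Finset.max'_mem _ lo _ hIne)
      have hmE : (↑m : Sym2 V) ∈ G.edgeSet := m.2
      obtain ⟨u, v, huv, hsm⟩ : ∃ u v, G.Adj u v ∧ (↑m : Sym2 V) = s(u, v) := by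
        revert hmE
        induction (↑m : Sym2 V) using Sym2.ind with
        | _ a b => exact fun h => ⟨a, b, h, rfl⟩
      set G' := G.deleteEdges {(↑m : Sym2 V)} with hG'
      have hbridge : ¬ G'.Reachable u v := by
        have hb : G.IsBridge s(u, v) :=
          (isAcyclic_iff_forall_adj_isBridge.mp hG.IsAcyclic) huv
        rw [isBridge_iff] at hb
        rw [hG', hsm]
        exact hb
      -- every G-walk: its endpoints are G'-reachable or straddle the edge m
      have hwalk : ∀ {x y : V} (p : G.Walk x y), G'.Reachable x y ∨
          (G'.Reachable x u ∧ G'.Reachable v y) ∨ (G'.Reachable x v ∧ G'.Reachable u y) := by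
        intro x y p
        induction p with
        | nil => exact Or.inl (Reachable.refl _)
        | cons h q ih =>
          rename_i a b c
          by_cases hab : s(a, b) = (↑m : Sym2 V)
          · rw [hsm, Sym2.eq_iff] at hab
            rcases hab with ⟨rfl, rfl⟩ | ⟨rfl, rfl⟩
            · rcases ih with h' | ⟨h', h''⟩ | ⟨h', h''⟩
              · exact Or.inr (Or.inl ⟨Reachable.refl _, h'⟩)
              · exact absurd h'.symm hbridge
              · exact Or.inl h''
            · rcases ih with h' | ⟨h', h''⟩ | ⟨h', h''⟩
              · exact Or.inr (Or.inr ⟨Reachable.refl _, h'⟩)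
              · exact Or.inl h''
              · exact absurd h' hbridge
          · have hadj : G'.Adj a b := by
              rw [hG', deleteEdges_adj]
              exact ⟨h, by simpa using hab⟩
            rcases ih with h' | ⟨h', h''⟩ | ⟨h', h''⟩
            · exact Or.inl (hadj.reachable.trans h')
            · exact Or.inr (Or.inl ⟨hadj.reachable.trans h', h''⟩)
            · exact Or.inr (Or.inr ⟨hadj.reachable.trans h', h''⟩)
      have hside : ∀ x : V, G'.Reachable x u ∨ G'.Reachable x v := by
        intro x
        obtain ⟨p⟩ := hconn x u
        rcases hwalk p with h | ⟨h, _⟩ | ⟨h, _⟩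
        · exact Or.inl h
        · exact Or.inl h
        · exact Or.inr h
      have hnotm : ∀ {x y : V} (w : G.Walk x y), (↑m : Sym2 V) ∉ w.edges → G'.Reachable x y := by
        intro x y w hw
        refine ⟨w.transfer G' fun e he => ?_⟩
        rw [hG', edgeSet_deleteEdges]
        refine ⟨w.edges_subset_edgeSet he, ?_⟩
        simp only [Set.mem_singleton_iff]
        rintro rfl
        exact hw he
      have hsame : ∀ x y : V, x ≠ y → G'.Reachable x y →
          ℓ x y ≠ m ∧ ∀ a : V, a ∈ (↑(ℓ x y) : Sym2 V) → G'.Reachable a x := by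
        intro x y hxy hr
        obtain ⟨w⟩ := hr
        have hsub : ∀ e ∈ w.edges, e ∈ G.edgeSet := fun e he =>
          edgeSet_mono (deleteEdges_le _) (w.edges_subset_edgeSet he)
        set wg := w.transfer G hsub with hwg
        have hE : (↑(ℓ x y) : Sym2 V) ∈ w.edges := by
          have h1 := (hℓ x y hxy wg.toPath wg.toPath.2).1
          have h2 := Walk.edges_toPath_subset wg h1
          rwa [hwg, Walk.edges_transfer] at h2
        constructor
        · intro hcon
          have hE' : (↑(ℓ x y) : Sym2 V) ∈ G'.edgeSet := w.edges_subset_edgeSet hE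
          rw [hG', edgeSet_deleteEdges] at hE'
          exact hE'.2 (by rw [hcon]; exact Set.mem_singleton _)
        · intro a ha
          obtain ⟨b, hb⟩ := Sym2.mem_iff_exists.mp ha
          have hsup : a ∈ w.support :=
            Walk.fst_mem_support_of_mem_edges w (by rw [← hb]; exact hE)
          exact (Reachable.symm ⟨w.takeUntil a hsup⟩)
      have hsep : ∀ x y : V, x ∈ A → y ∈ A → x ≠ y → ¬ G'.Reachable x y → ℓ x y = m := by
        intro x y hx hy hxy hr
        obtain ⟨p, hp⟩ := hpath x y
        have hmem : (↑m : Sym2 V) ∈ p.edges := by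
          by_contra hcon
          exact hr (hnotm p hcon)
        have hle1 : lo.le m (ℓ x y) := (hℓ x y hxy p hp).2 m hmem
        have hle2 : lo.le (ℓ x y) m := hmax _ ((memIm A _).mpr ⟨x, hx, y, hy, hxy, rfl⟩)
        exact lo.le_antisymm _ _ hle2 hle1
      set A1 := A.filter (fun x => G'.Reachable x u) with hA1d
      set A2 := A.filter (fun x => ¬ G'.Reachable x u) with hA2d
      have hA1sub : A1 ⊆ A := Finset.filter_subset _ _
      have hA2sub : A2 ⊆ A := Finset.filter_subset _ _
      have hA2v : ∀ x ∈ A2, G'.Reachable x v := by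
        intro x hx
        rcases hside x with h | h
        · exact absurd h (Finset.mem_filter.mp hx).2
        · exact h
      have hreach_same : ∀ x y : V, x ∈ A1 → y ∈ A1 → G'.Reachable x y := fun x y hx hy =>
        ((Finset.mem_filter.mp hx).2).trans ((Finset.mem_filter.mp hy).2).symm
      have hreach_same2 : ∀ x y : V, x ∈ A2 → y ∈ A2 → G'.Reachable x y := fun x y hx hy =>
        (hA2v x hx).trans (hA2v y hy).symm
      have hcross : ∀ x y : V, x ∈ A1 → y ∈ A2 → ¬ G'.Reachable x y := by
        intro x y hx hy hr
        exact (Finset.mem_filter.mp hy).2 (hr.symm.trans (Finset.mem_filter.mp hx).2)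
      have hsplit : (x1 ∈ A1 ∧ y1 ∈ A2) ∨ (x1 ∈ A2 ∧ y1 ∈ A1) := by
        have h12 : ¬ G'.Reachable x1 y1 := by
          intro hr
          exact (hsame x1 y1 hne1 hr).1 hℓ1
        by_cases h1' : G'.Reachable x1 u
        · left
          refine ⟨Finset.mem_filter.mpr ⟨hx1, h1'⟩, Finset.mem_filter.mpr ⟨hy1, ?_⟩⟩
          intro h2'
          exact h12 (h1'.trans h2'.symm)
        · right
          refine ⟨Finset.mem_filter.mpr ⟨hx1, h1'⟩, Finset.mem_filter.mpr ⟨hy1, ?_⟩⟩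
          rcases hside y1 with h | h
          · exact h
          · exfalso
            rcases hside x1 with h' | h'
            · exact h1' h'
            · exact h12 (h'.trans h.symm)
      have hA1ne : A1.Nonempty := by rcases hsplit with ⟨h, _⟩ | ⟨_, h⟩ <;> exact ⟨_, h⟩
      have hA2ne : A2.Nonempty := by rcases hsplit with ⟨_, h⟩ | ⟨h, _⟩ <;> exact ⟨_, h⟩
      have hmemcross : m ∈ Im A := (memIm A m).mpr ⟨x1, hx1, y1, hy1, hne1, hℓ1⟩
      have hdecomp : Im A = (Im A1 ∪ Im A2) ∪ {m} := by
        ext f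
        constructor
        · intro hf
          obtain ⟨x, hx, y, hy, hxy, hfeq⟩ := (memIm A f).mp hf
          by_cases sx : G'.Reachable x u <;> by_cases sy : G'.Reachable y u
          · exact Finset.mem_union_left _ (Finset.mem_union_left _
              ((memIm A1 f).mpr ⟨x, Finset.mem_filter.mpr ⟨hx, sx⟩,
                y, Finset.mem_filter.mpr ⟨hy, sy⟩, hxy, hfeq⟩))
          · refine Finset.mem_union_right _ ?_
            have hnr : ¬ G'.Reachable x y := hcross x y
              (Finset.mem_filter.mpr ⟨hx, sx⟩) (Finset.mem_filter.mpr ⟨hy, sy⟩)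
            rw [Finset.mem_singleton, ← hfeq]
            exact hsep x y hx hy hxy hnr
          · refine Finset.mem_union_right _ ?_
            have hnr : ¬ G'.Reachable y x := hcross y x
              (Finset.mem_filter.mpr ⟨hy, sy⟩) (Finset.mem_filter.mpr ⟨hx, sx⟩)
            rw [Finset.mem_singleton, ← hfeq]
            exact hsep x y hx hy hxy (fun hr => hnr hr.symm)
          · exact Finset.mem_union_left _ (Finset.mem_union_right _
              ((memIm A2 f).mpr ⟨x, Finset.mem_filter.mpr ⟨hx, sx⟩,
                y, Finset.mem_filter.mpr ⟨hy, sy⟩, hxy, hfeq⟩))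
        · intro hf
          rcases Finset.mem_union.mp hf with hf | hf
          · rcases Finset.mem_union.mp hf with hf | hf
            · obtain ⟨x, hx, y, hy, hxy, hfeq⟩ := (memIm A1 f).mp hf
              exact (memIm A f).mpr ⟨x, hA1sub hx, y, hA1sub hy, hxy, hfeq⟩
            · obtain ⟨x, hx, y, hy, hxy, hfeq⟩ := (memIm A2 f).mp hf
              exact (memIm A f).mpr ⟨x, hA2sub hx, y, hA2sub hy, hxy, hfeq⟩
          · rw [Finset.mem_singleton.mp hf]
            exact hmemcross
      have hIm1 : ∀ f ∈ Im A1, f ≠ m ∧ ∀ a : V, a ∈ (↑f : Sym2 V) → G'.Reachable a u := by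
        intro f hf
        obtain ⟨x, hx, y, hy, hxy, hfeq⟩ := (memIm A1 f).mp hf
        have hr := hreach_same x y hx hy
        obtain ⟨h1', h2'⟩ := hsame x y hxy hr
        rw [hfeq] at h1' h2'
        exact ⟨h1', fun a ha => (h2' a ha).trans (Finset.mem_filter.mp hx).2⟩
      have hIm2 : ∀ f ∈ Im A2, f ≠ m ∧ ∀ a : V, a ∈ (↑f : Sym2 V) → G'.Reachable a v := by
        intro f hf
        obtain ⟨x, hx, y, hy, hxy, hfeq⟩ := (memIm A2 f).mp hf
        have hr := hreach_same2 x y hx hy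
        obtain ⟨h1', h2'⟩ := hsame x y hxy hr
        rw [hfeq] at h1' h2'
        exact ⟨h1', fun a ha => (h2' a ha).trans (hA2v x hx)⟩
      have hdisj12 : Disjoint (Im A1) (Im A2) := by
        rw [Finset.disjoint_left]
        intro f hf1 hf2
        have ha : (↑f : Sym2 V).out.1 ∈ (↑f : Sym2 V) := Sym2.out_fst_mem _
        have h1' := (hIm1 f hf1).2 _ ha
        have h2' := (hIm2 f hf2).2 _ ha
        exact hbridge (h1'.symm.trans h2')
      have hmnot : m ∉ Im A1 ∪ Im A2 := by
        intro hmem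
        rcases Finset.mem_union.mp hmem with h | h
        · exact (hIm1 m h).1 rfl
        · exact (hIm2 m h).1 rfl
      have hA1ssub : A1 ⊂ A := by
        refine (Finset.ssubset_iff_of_subset hA1sub).mpr ?_
        obtain ⟨y, hy⟩ := hA2ne
        exact ⟨y, hA2sub hy, fun h => (Finset.mem_filter.mp hy).2 (Finset.mem_filter.mp h).2⟩
      have hA2ssub : A2 ⊂ A := by
        refine (Finset.ssubset_iff_of_subset hA2sub).mpr ?_
        obtain ⟨y, hy⟩ := hA1ne
        exact ⟨y, hA1sub hy, fun h => (Finset.mem_filter.mp h).2 (Finset.mem_filter.mp hy).2⟩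
      have hc1 := IH A1 hA1ssub hA1ne
      have hc2 := IH A2 hA2ssub hA2ne
      have hcards : A1.card + A2.card = A.card :=
        Finset.card_filter_add_card_filter_not _
      have hca : (Im A).card = (Im A1).card + (Im A2).card + 1 := by
        rw [hdecomp, Finset.card_union_of_disjoint (by rwa [Finset.disjoint_singleton_right]),
          Finset.card_union_of_disjoint hdisj12, Finset.card_singleton]
      show (Im A).card = A.card - 1
      rw [hca]
      have h1c : 1 ≤ A1.card := Finset.card_pos.mpr hA1ne
      have h2c : 1 ≤ A2.card := Finset.card_pos.mpr hA2ne
      rw [hc1, hc2]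
      omega
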